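/- arXiv:1010.1455 — 4 statements merged into one kernel-verified Lean document; each statement's English description precedes it below -/
import Mathlib

section
/- In Nim on graphs played on the complete graph K_n (n > 1) with every edge of weight 1, the first player has a winning strategy from any starting vertex. -/
/-- A position of Nim on graphs: a symmetric non-negative integer weight
function on pairs of vertices (the weighted graph; weight-zero pairs are
non-edges) plus the location of the indicator piece. -/
structure NimPos (V : Type) where
  w : V → V → ℕ
  symm : ∀ u v, w u v = w v u
  pos : V

/-- A legal move: decrease the weight of an edge incident with the piece to a
strictly smaller value and move the piece along it; all other weights stay. -/
def NimMove {V : Type} (p q : NimPos V) : Prop :=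
  p.pos ≠ q.pos ∧
  q.w p.pos q.pos < p.w p.pos q.pos ∧
  ∀ u v, ¬((u = p.pos ∧ v = q.pos) ∨ (u = q.pos ∧ v = p.pos)) → q.w u v = p.w u v

/-- The player to move loses (the position is a 0-position): the opponent has
a winning strategy `f` answering every move. -/
inductive MoverLoses {V : Type} : NimPos V → Prop
  | intro (p : NimPos V) (f : ∀ q, NimMove p q → NimPos V)
      (hmove : ∀ q (h : NimMove p q), NimMove q (f q h))
      (hwin : ∀ q (h : NimMove p q), MoverLoses (f q h)) : MoverLoses p

/-- The player to move wins (the position is a p-position). -/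
def MoverWins {V : Type} (p : NimPos V) : Prop :=
  ∃ q, NimMove p q ∧ MoverLoses q

/-- Weights of the path on vertices `0,…,n` of `Fin (n+1)`: edge `i — i+1` has weight `ω i`. -/
def pathW (n : ℕ) (ω : ℕ → ℕ) (u v : Fin (n+1)) : ℕ :=
  if u.val + 1 = v.val then ω u.val
  else if v.val + 1 = u.val then ω v.val else 0

theorem pathW_symm (n : ℕ) (ω : ℕ → ℕ) : ∀ u v, pathW n ω u v = pathW n ω v u := by
  intro u v; unfold pathW; split_ifs <;> first | rfl | (exfalso; omega)

/-- Weights of the cycle on `Fin m` (`m ≥ 3`): edge `i — (i+1) % m` has weight `ω i`. -/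
def cycW (m : ℕ) (ω : ℕ → ℕ) (u v : Fin m) : ℕ :=
  (if (u.val + 1) % m = v.val then ω u.val else 0) +
  (if (v.val + 1) % m = u.val then ω v.val else 0)

theorem cycW_symm (m : ℕ) (ω : ℕ → ℕ) : ∀ u v, cycW m ω u v = cycW m ω v u :=
  fun _ _ => Nat.add_comm _ _

/-- Weight-1 complete bipartite graph `K_{2,j}`: part `{0,1}` and part `{2,…,j+1}`. -/
def k2W (j : ℕ) (u v : Fin (j+2)) : ℕ :=
  if (u.val < 2 ∧ 2 ≤ v.val) ∨ (v.val < 2 ∧ 2 ≤ u.val) then 1 else 0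

theorem k2W_symm (j : ℕ) : ∀ u v, k2W j u v = k2W j v u := by
  intro u v; unfold k2W; split_ifs <;> omega

/-- Weight-1 `SSB_j = K_{2,j} + e_{12}`: `K_{2,j}` plus the edge `0 — 1`. -/
def ssbW (j : ℕ) (u v : Fin (j+2)) : ℕ :=
  if ((u.val < 2 ∧ 2 ≤ v.val) ∨ (v.val < 2 ∧ 2 ≤ u.val)) ∨
      (u.val < 2 ∧ v.val < 2 ∧ u.val ≠ v.val) then 1 else 0

theorem ssbW_symm (j : ℕ) : ∀ u v, ssbW j u v = ssbW j v u := by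
  intro u v; unfold ssbW; split_ifs <;> omega

/-- Weight-1 complete graph `K_n`. -/
def knW (n : ℕ) (u v : Fin n) : ℕ := if u.val ≠ v.val then 1 else 0

theorem knW_symm (n : ℕ) : ∀ u v, knW n u v = knW n v u := by
  intro u v; unfold knW; split_ifs <;> omega

/-- Length of the maximal all-positive run of cycle edges clockwise from vertex `s`. -/
noncomputable def fwdLen (m : ℕ) (w : ℕ → ℕ) (s : ℕ) : ℕ :=
  sSup {d | d ≤ m ∧ ∀ i < d, 0 < w ((s + i) % m)}

/-- Length of the maximal all-positive run of cycle edges counterclockwise from vertex `s`. -/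
noncomputable def bwdLen (m : ℕ) (w : ℕ → ℕ) (s : ℕ) : ℕ :=
  sSup {d | d ≤ m ∧ ∀ i < d, 0 < w ((s + m - 1 - i) % m)}

section NimAux

lemma NimPos.ext' {V : Type} {p q : NimPos V} (hw : p.w = q.w) (hp : p.pos = q.pos) :
    p = q := by
  cases p; cases q; cases hw; cases hp; rfl

/-- The pairs deleted from `K_n` in a "book" position: the diagonal, the hub
edge `a—b`, and the edges from each `x ∈ X` to the hubs `a` and `b`. -/
def kC (n : ℕ) (a b : Fin n) (X : Finset (Fin n)) (u v : Fin n) : Prop :=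
  u = v ∨ (u = a ∧ v = b) ∨ (u = b ∧ v = a) ∨
    (u ∈ X ∧ (v = a ∨ v = b)) ∨ (v ∈ X ∧ (u = a ∨ u = b))

instance kC.dec (n : ℕ) (a b : Fin n) (X : Finset (Fin n)) (u v : Fin n) :
    Decidable (kC n a b X u v) := by unfold kC; infer_instance

lemma kC_symm {n : ℕ} {a b : Fin n} {X : Finset (Fin n)} {u v : Fin n}
    (h : kC n a b X u v) : kC n a b X v u := by
  rcases h with h | ⟨h1, h2⟩ | ⟨h1, h2⟩ | h | h
  · exact Or.inl h.symm
  · exact Or.inr (Or.inr (Or.inl ⟨h2, h1⟩))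
  · exact Or.inr (Or.inl ⟨h2, h1⟩)
  · exact Or.inr (Or.inr (Or.inr (Or.inr h)))
  · exact Or.inr (Or.inr (Or.inr (Or.inl h)))

/-- Complete graph `K_n` with a "book" deleted: the edge `a—b` and, for each
`x ∈ X`, the edges `a—x` and `x—b` are removed; the token sits at hub `a`. -/
def kPos (n : ℕ) (a b : Fin n) (X : Finset (Fin n)) : NimPos (Fin n) where
  w u v := if kC n a b X u v then 0 else 1
  symm _ _ := if_congr ⟨kC_symm, kC_symm⟩ rfl rfl
  pos := a

lemma kPos_w (n : ℕ) (a b : Fin n) (X : Finset (Fin n)) (u v : Fin n) :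
    (kPos n a b X).w u v = if kC n a b X u v then 0 else 1 := rfl

lemma kPos_pos (n : ℕ) (a b : Fin n) (X : Finset (Fin n)) :
    (kPos n a b X).pos = a := rfl

/-- The mirror response: zero out the edge from the current token to `b` and
move the token to `b`. -/
def resp {V : Type} [DecidableEq V] (q : NimPos V) (b : V) : NimPos V where
  w u v := if (u = q.pos ∧ v = b) ∨ (u = b ∧ v = q.pos) then 0 else q.w u v
  symm u v :=
    if_congr ⟨fun h => h.elim (fun h' => Or.inr ⟨h'.2, h'.1⟩) (fun h' => Or.inl ⟨h'.2, h'.1⟩),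
        fun h => h.elim (fun h' => Or.inr ⟨h'.2, h'.1⟩) (fun h' => Or.inl ⟨h'.2, h'.1⟩)⟩
      rfl (q.symm u v)
  pos := b

lemma resp_w {V : Type} [DecidableEq V] (q : NimPos V) (b : V) (u v : V) :
    (resp q b).w u v = if (u = q.pos ∧ v = b) ∨ (u = b ∧ v = q.pos) then 0
      else q.w u v := rfl

lemma resp_pos {V : Type} [DecidableEq V] (q : NimPos V) (b : V) :
    (resp q b).pos = b := rfl

lemma kPos_move_facts {n : ℕ} {a b : Fin n} {X : Finset (Fin n)} {q : NimPos (Fin n)}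
    (h : NimMove (kPos n a b X) q) :
    a ≠ q.pos ∧ q.pos ≠ b ∧ q.pos ∉ X ∧ q.w a q.pos = 0 := by
  have hya : a ≠ q.pos := h.1
  have hcond : ¬ kC n a b X a q.pos := by
    intro hc
    have h2 := h.2.1
    rw [kPos_pos, kPos_w, if_pos hc] at h2
    omega
  have hyb : q.pos ≠ b := fun e => hcond (Or.inr (Or.inl ⟨rfl, e⟩))
  have hyX : q.pos ∉ X := fun e =>
    hcond (Or.inr (Or.inr (Or.inr (Or.inr ⟨e, Or.inl rfl⟩))))
  have h0 : q.w a q.pos = 0 := by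
    have h2 := h.2.1
    rw [kPos_pos, kPos_w, if_neg hcond] at h2
    omega
  exact ⟨hya, hyb, hyX, h0⟩

theorem kPos_loses (n : ℕ) (a b : Fin n) (X : Finset (Fin n)) (hab : a ≠ b)
    (ha : a ∉ X) (hb : b ∉ X) : MoverLoses (kPos n a b X) := by
  refine MoverLoses.intro _ (fun q _ => resp q b) ?_ ?_
  · -- the mirror response is a legal move
    intro q h
    obtain ⟨hya, hyb, hyX, h0⟩ := kPos_move_facts h
    refine ⟨hyb, ?_, ?_⟩
    · show (resp q b).w q.pos b < q.w q.pos b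
      have hq := h.2.2 q.pos b (by
        rintro (⟨e1, e2⟩ | ⟨e1, e2⟩)
        · exact hya e1.symm
        · exact hab e2.symm)
      rw [kPos_w] at hq
      rw [hq, resp_w, if_pos (Or.inl ⟨rfl, rfl⟩), if_neg (by
        rintro (e | ⟨e1, e2⟩ | ⟨e1, e2⟩ | ⟨e1, _⟩ | ⟨e1, _⟩)
        · exact hyb e
        · exact hya e1.symm
        · exact hyb e1
        · exact hyX e1
        · exact hb e1)]
      omega
    · intro u v huv
      exact if_neg (fun hc => huv hc)
  · -- the resulting position is again in the family
    intro q h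
    obtain ⟨hya, hyb, hyX, h0⟩ := kPos_move_facts h
    have h22 := h.2.2
    have heq : resp q b = kPos n b a (insert q.pos X) := by
      refine NimPos.ext' (funext fun u => funext fun v => ?_) rfl
      rw [resp_w, kPos_w]
      by_cases hA : (u = q.pos ∧ v = b) ∨ (u = b ∧ v = q.pos)
      · refine (if_pos hA).trans (if_pos ?_).symm
        rcases hA with ⟨e1, e2⟩ | ⟨e1, e2⟩ <;> subst e1 <;> subst e2
        · exact Or.inr (Or.inr (Or.inr (Or.inl
            ⟨Finset.mem_insert_self _ _, Or.inl rfl⟩)))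
        · exact Or.inr (Or.inr (Or.inr (Or.inr
            ⟨Finset.mem_insert_self _ _, Or.inl rfl⟩)))
      · rw [if_neg hA]
        by_cases hB : (u = a ∧ v = q.pos) ∨ (u = q.pos ∧ v = a)
        · have hqv : q.w u v = 0 := by
            rcases hB with ⟨e1, e2⟩ | ⟨e1, e2⟩ <;> subst e1 <;> subst e2
            · exact h0
            · rw [q.symm]; exact h0
          refine hqv.trans (if_pos ?_).symm
          rcases hB with ⟨e1, e2⟩ | ⟨e1, e2⟩ <;> subst e1 <;> subst e2
          · exact Or.inr (Or.inr (Or.inr (Or.inr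
              ⟨Finset.mem_insert_self _ _, Or.inr rfl⟩)))
          · exact Or.inr (Or.inr (Or.inr (Or.inl
              ⟨Finset.mem_insert_self _ _, Or.inr rfl⟩)))
        · rw [h22 u v hB, kPos_w]
          refine if_congr ⟨fun hc => ?_, fun hc => ?_⟩ rfl rfl
          · rcases hc with e | ⟨e1, e2⟩ | ⟨e1, e2⟩ | ⟨e1, e2⟩ | ⟨e1, e2⟩
            · exact Or.inl e
            · exact Or.inr (Or.inr (Or.inl ⟨e1, e2⟩))
            · exact Or.inr (Or.inl ⟨e1, e2⟩)
            · exact Or.inr (Or.inr (Or.inr (Or.inl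
                ⟨Finset.mem_insert_of_mem e1, e2.symm⟩)))
            · exact Or.inr (Or.inr (Or.inr (Or.inr
                ⟨Finset.mem_insert_of_mem e1, e2.symm⟩)))
          · rcases hc with e | ⟨e1, e2⟩ | ⟨e1, e2⟩ | ⟨e1, e2⟩ | ⟨e1, e2⟩
            · exact Or.inl e
            · exact Or.inr (Or.inr (Or.inl ⟨e1, e2⟩))
            · exact Or.inr (Or.inl ⟨e1, e2⟩)
            · rcases Finset.mem_insert.mp e1 with e1 | e1
              · rcases e2 with e2 | e2
                · exact absurd (Or.inl ⟨e1, e2⟩) hA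
                · exact absurd (Or.inr ⟨e1, e2⟩) hB
              · exact Or.inr (Or.inr (Or.inr (Or.inl ⟨e1, e2.symm⟩)))
            · rcases Finset.mem_insert.mp e1 with e1 | e1
              · rcases e2 with e2 | e2
                · exact absurd (Or.inr ⟨e2, e1⟩) hA
                · exact absurd (Or.inl ⟨e2, e1⟩) hB
              · exact Or.inr (Or.inr (Or.inr (Or.inr ⟨e1, e2.symm⟩)))
    show MoverLoses (resp q b)
    rw [heq]
    have hXcard : (insert q.pos X).card = X.card + 1 :=
      Finset.card_insert_of_notMem hyX
    have hXle : (insert q.pos X).card ≤ n := by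
      calc (insert q.pos X).card ≤ (Finset.univ : Finset (Fin n)).card :=
            Finset.card_le_card (Finset.subset_univ _)
        _ = n := Finset.card_fin n
    exact kPos_loses n b a (insert q.pos X) hab.symm
      (by simp only [Finset.mem_insert, not_or]; exact ⟨Ne.symm hyb, hb⟩)
      (by simp only [Finset.mem_insert, not_or]; exact ⟨hya, ha⟩)
termination_by n - X.card
decreasing_by omega

end NimAux

/-- Nim on the complete graph `K_n` (`n > 1`) with all edge
weights 1: the first player wins from any starting vertex. -/
theorem stmt11 (n : ℕ) (hn : 1 < n) (s : Fin n) :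
    MoverWins ⟨knW n, knW_symm n, s⟩ := by
  classical
  have h0n : 0 < n := by omega
  obtain ⟨t, hts⟩ : ∃ t : Fin n, t ≠ s := by
    by_cases hs : s = ⟨0, h0n⟩
    · exact ⟨⟨1, hn⟩, by rw [hs]; exact fun e => absurd (congrArg Fin.val e) one_ne_zero⟩
    · exact ⟨⟨0, h0n⟩, fun e => hs e.symm⟩
  have hst : s ≠ t := hts.symm
  refine ⟨kPos n t s ∅, ⟨?_, ?_, ?_⟩, kPos_loses n t s ∅ hts (Finset.notMem_empty _)
    (Finset.notMem_empty _)⟩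
  · exact hst
  · show (kPos n t s ∅).w s t < knW n s t
    rw [kPos_w, if_pos (show kC n t s ∅ s t from Or.inr (Or.inr (Or.inl ⟨rfl, rfl⟩))), knW,
      if_pos (fun e => hst (Fin.ext e))]
    omega
  · intro u v huv
    show (kPos n t s ∅).w u v = knW n u v
    simp only [kPos_pos] at huv
    rw [kPos_w, knW]
    by_cases he : u = v
    · subst he
      rw [if_pos (show kC n t s ∅ u u from Or.inl rfl), if_neg (by simp)]
    · rw [if_neg (show ¬ kC n t s ∅ u v by
        rintro (e | ⟨e1, e2⟩ | ⟨e1, e2⟩ | ⟨he2, _⟩ | ⟨he2, _⟩)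
        · exact he e
        · exact huv (Or.inr ⟨e1, e2⟩)
        · exact huv (Or.inl ⟨e1, e2⟩)
        · exact absurd he2 (Finset.notMem_empty u)
        · exact absurd he2 (Finset.notMem_empty v)),
        if_pos (fun e => he (Fin.ext e))]
end

section
/- In Nim on graphs played on K_n with all edge weights 1 and starting vertex v_1, the first player can force play to stay within the SSB subgraph on v_1, v_2: by first moving to v_2 and thereafter always returning to v_1 or v_2, the first player ensures that all edges incident with v_1 and v_2 are eventually exhausted with the second player stuck; specifically, if n is even the second player is stranded at v_2, and if n is odd the second player is stranded at v_1. -/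
/-- `ForcesVia S t p`: from position `p`, the player to move can always move
to a position whose piece lies in `S`, so that either the opponent is then
stuck at the vertex `t`, or every reply can again be answered this way. -/
inductive ForcesVia {V : Type} (S : V → Prop) (t : V) : NimPos V → Prop
  | step (p q : NimPos V) (hS : S q.pos) (hq : NimMove p q)
      (hstuck : (∀ r, ¬ NimMove q r) → q.pos = t)
      (hcont : ∀ r, NimMove q r → ForcesVia S t r) : ForcesVia S t p

/-- Zero out the edge `a — b` in a weight function. -/
def zapW {V : Type} [DecidableEq V] (W : V → V → ℕ) (a b : V) (u v : V) : ℕ :=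
  if (u = a ∧ v = b) ∨ (u = b ∧ v = a) then 0 else W u v

lemma zapW_symm {V : Type} [DecidableEq V] (W : V → V → ℕ) (hW : ∀ u v, W u v = W v u) (a b : V) :
    ∀ u v, zapW W a b u v = zapW W a b v u := by
  intro u v; unfold zapW
  by_cases h : (u = a ∧ v = b) ∨ (u = b ∧ v = a)
  · rw [if_pos h, if_pos (by tauto)]
  · rw [if_neg h, if_neg (by tauto), hW]

/-- Weights during player 1's SSB strategy: edge `0 — 1` is gone, edges among
vertices `≥ 2` are intact, and edges from `{0,1}` to a vertex `≥ 2` are intact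
exactly for vertices in the fresh set `F`. -/
def wFr (n : ℕ) (F : Finset (Fin n)) (u v : Fin n) : ℕ :=
  if (2 ≤ u.val ∧ 2 ≤ v.val ∧ u ≠ v) ∨ (u.val < 2 ∧ v ∈ F) ∨ (v.val < 2 ∧ u ∈ F)
  then 1 else 0

lemma wFr_symm (n : ℕ) (F : Finset (Fin n)) : ∀ u v, wFr n F u v = wFr n F v u := by
  intro u v; unfold wFr
  have hiff : ∀ a b : Fin n,
      ((2 ≤ a.val ∧ 2 ≤ b.val ∧ a ≠ b) ∨ (a.val < 2 ∧ b ∈ F) ∨ (b.val < 2 ∧ a ∈ F)) →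
      ((2 ≤ b.val ∧ 2 ≤ a.val ∧ b ≠ a) ∨ (b.val < 2 ∧ a ∈ F) ∨ (a.val < 2 ∧ b ∈ F)) := by
    rintro a b (⟨h1, h2, h3⟩ | h | h)
    · exact Or.inl ⟨h2, h1, Ne.symm h3⟩
    · exact Or.inr (Or.inr h)
    · exact Or.inr (Or.inl h)
  by_cases h : (2 ≤ u.val ∧ 2 ≤ v.val ∧ u ≠ v) ∨ (u.val < 2 ∧ v ∈ F) ∨ (v.val < 2 ∧ u ∈ F)
  · rw [if_pos h, if_pos (hiff u v h)]
  · rw [if_neg h, if_neg (fun hc => h (hiff v u hc))]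

lemma wFr_low (n : ℕ) (F : Finset (Fin n)) (hge : ∀ z ∈ F, 2 ≤ z.val)
    {u v : Fin n} (hu : u.val < 2) : wFr n F u v = if v ∈ F then 1 else 0 := by
  unfold wFr
  by_cases hv : v ∈ F
  · rw [if_pos hv, if_pos (Or.inr (Or.inl ⟨hu, hv⟩))]
  · rw [if_neg hv, if_neg]
    rintro (⟨h, _⟩ | ⟨_, h⟩ | ⟨_, h⟩)
    · omega
    · exact hv h
    · exact absurd (hge u h) (by omega)

lemma wFr_low' (n : ℕ) (F : Finset (Fin n)) (hge : ∀ z ∈ F, 2 ≤ z.val)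
    {u v : Fin n} (hv : v.val < 2) : wFr n F u v = if u ∈ F then 1 else 0 := by
  rw [wFr_symm]; exact wFr_low n F hge hv

lemma wFr_high (n : ℕ) (F : Finset (Fin n)) (hge : ∀ z ∈ F, 2 ≤ z.val)
    {u v : Fin n} (hu : 2 ≤ u.val) (hv : 2 ≤ v.val) :
    wFr n F u v = if u = v then 0 else 1 := by
  unfold wFr
  by_cases h : u = v
  · rw [if_pos h, if_neg]
    rintro (⟨_, _, h'⟩ | ⟨h', _⟩ | ⟨h', _⟩)
    · exact h' h
    · omega
    · omega
  · rw [if_neg h, if_pos (Or.inl ⟨hu, hv, h⟩)]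

/-- From a position with fresh weights and piece at `c ∈ {0,1}`, a move exists
whenever some fresh vertex exists. -/
lemma wFr_exists_move (n : ℕ) (F : Finset (Fin n)) (hge : ∀ z ∈ F, 2 ≤ z.val)
    (c y : Fin n) (hc : c.val < 2) (hy : y ∈ F) (Q : NimPos (Fin n))
    (hQ : Q.pos = c) (hQw : ∀ u v, Q.w u v = wFr n F u v) :
    ∃ r, NimMove Q r := by
  refine ⟨⟨zapW (wFr n F) c y, zapW_symm _ (wFr_symm n F) c y, y⟩, ?_, ?_, ?_⟩
  · show Q.pos ≠ y
    rw [hQ]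
    intro h
    have h2 := hge y hy
    have h3 := congrArg Fin.val h
    omega
  · show zapW (wFr n F) c y Q.pos y < Q.w Q.pos y
    rw [hQ, hQw, wFr_low n F hge hc, if_pos hy]
    unfold zapW
    rw [if_pos (Or.inl ⟨rfl, rfl⟩)]
    omega
  · intro u v hnp
    show zapW (wFr n F) c y u v = Q.w u v
    rw [hQw]
    refine if_neg fun hcon => hnp ?_
    rcases hcon with ⟨h1, h2⟩ | ⟨h1, h2⟩
    · exact Or.inl ⟨h1.trans hQ.symm, h2⟩
    · exact Or.inr ⟨h1, h2.trans hQ.symm⟩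

/-- Main induction: piece at fresh vertex `x`, fresh set `F`, opponent came
from `b ∈ {0,1}`; the mover (player 1) forces play through `{0,1}`. -/
lemma ssb_aux (n : ℕ) (hn : 2 ≤ n) :
    ∀ k (F : Finset (Fin n)), F.card = k → (∀ z ∈ F, 2 ≤ z.val) →
    ∀ (b x : Fin n), b.val < 2 → x ∈ F →
    ∀ (P : NimPos (Fin n)), P.pos = x →
    (∀ u v, P.w u v = zapW (wFr n F) b x u v) →
    ForcesVia (fun z : Fin n => z.val = 0 ∨ z.val = 1)
      (if Even k then b else ⟨1 - b.val, by omega⟩) P := by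
  intro k
  induction k using Nat.strong_induction_on with
  | _ k ih =>
    intro F hcard hge b x hb hx P hpos hw
    have hk1 : 1 ≤ k := by
      have := Finset.card_pos.mpr ⟨x, hx⟩; omega
    have hx2 : 2 ≤ x.val := hge x hx
    set c : Fin n := ⟨1 - b.val, by omega⟩ with hc
    have hcval : c.val = 1 - b.val := rfl
    have hcb : c ≠ b := by
      intro h; have := congrArg Fin.val h; rw [hcval] at this; omega
    have hge' : ∀ z ∈ F.erase x, 2 ≤ z.val :=
      fun z hz => hge z (Finset.mem_of_mem_erase hz)
    set q : NimPos (Fin n) := ⟨wFr n (F.erase x), wFr_symm n _, c⟩ with hqdef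
    have hmovePq : NimMove P q := by
      refine ⟨?_, ?_, ?_⟩
      · rw [hpos]; intro h
        have := congrArg Fin.val h
        rw [hcval] at this; omega
      · rw [hpos]
        show q.w x c < P.w x c
        rw [hw]
        show wFr n (F.erase x) x c < zapW (wFr n F) b x x c
        rw [wFr_low' n _ hge' (by omega), if_neg (Finset.notMem_erase x F)]
        unfold zapW
        rw [if_neg, wFr_low' n F hge (by omega), if_pos hx]
        · omega
        · rintro (⟨h1, _⟩ | ⟨_, h2⟩)
          · have := congrArg Fin.val h1; omega
          · exact hcb h2
      · intro u v hnp
        rw [hpos] at hnp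
        show q.w u v = P.w u v
        rw [hw]
        show wFr n (F.erase x) u v = zapW (wFr n F) b x u v
        unfold zapW
        by_cases hp : (u = b ∧ v = x) ∨ (u = x ∧ v = b)
        · rw [if_pos hp]
          rcases hp with ⟨h1, h2⟩ | ⟨h1, h2⟩
          · rw [h1, h2, wFr_low n _ hge' (by omega), if_neg (Finset.notMem_erase x F)]
          · rw [h1, h2, wFr_low' n _ hge' (by omega), if_neg (Finset.notMem_erase x F)]
        · rw [if_neg hp]
          by_cases hu2 : 2 ≤ u.val <;> by_cases hv2 : 2 ≤ v.val
          · rw [wFr_high n _ hge' hu2 hv2, wFr_high n F hge hu2 hv2]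
          · -- u ≥ 2, v < 2
            have hux : u ≠ x := by
              intro h; subst h
              have hvb : v = b ∨ v = c := by
                by_cases h' : v.val = b.val
                · exact Or.inl (Fin.ext h')
                · right; apply Fin.ext; rw [hcval]; omega
              rcases hvb with h | h
              · exact hp (Or.inr ⟨rfl, h⟩)
              · exact hnp (Or.inl ⟨rfl, h⟩)
            rw [wFr_low' n _ hge' (by omega), wFr_low' n F hge (by omega)]
            by_cases hmem : u ∈ F
            · rw [if_pos hmem, if_pos (Finset.mem_erase.mpr ⟨hux, hmem⟩)]
            · rw [if_neg hmem, if_neg (fun hh => hmem (Finset.mem_of_mem_erase hh))]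
          · -- u < 2, v ≥ 2
            have hvx : v ≠ x := by
              intro h; subst h
              have hub : u = b ∨ u = c := by
                by_cases h' : u.val = b.val
                · exact Or.inl (Fin.ext h')
                · right; apply Fin.ext; rw [hcval]; omega
              rcases hub with h | h
              · exact hp (Or.inl ⟨h, rfl⟩)
              · exact hnp (Or.inr ⟨h, rfl⟩)
            rw [wFr_low n _ hge' (by omega), wFr_low n F hge (by omega)]
            by_cases hmem : v ∈ F
            · rw [if_pos hmem, if_pos (Finset.mem_erase.mpr ⟨hvx, hmem⟩)]
            · rw [if_neg hmem, if_neg (fun hh => hmem (Finset.mem_of_mem_erase hh))]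
          · -- both < 2
            rw [wFr_low n _ hge' (by omega), wFr_low n F hge (by omega)]
            have h1 : v ∉ F := fun h => absurd (hge v h) (by omega)
            have h2 : v ∉ F.erase x := fun h => absurd (hge' v h) (by omega)
            rw [if_neg h1, if_neg h2]
    refine ForcesVia.step P q (Or.elim (Nat.lt_or_ge b.val 1)
        (fun h => Or.inr (by show c.val = 1; rw [hcval]; omega))
        (fun h => Or.inl (by show c.val = 0; rw [hcval]; omega)))
      hmovePq ?_ ?_
    · -- hstuck
      intro hstk
      show q.pos = if Even k then b else c
      rcases Finset.eq_empty_or_nonempty (F.erase x) with hE | ⟨y, hy⟩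
      · have hkone : k = 1 := by
          have h1 := Finset.card_erase_of_mem hx
          rw [hE] at h1
          simp at h1
          omega
        rw [hkone, if_neg (by decide)]
      · exfalso
        obtain ⟨r0, hr0⟩ := wFr_exists_move n (F.erase x) hge' c y (by rw [hcval]; omega)
          hy q rfl (fun _ _ => rfl)
        exact hstk r0 hr0
    · -- hcont
      intro r hr
      obtain ⟨hne, hlt, hoth⟩ := hr
      have hqpos : q.pos = c := rfl
      rw [hqpos] at hne hlt hoth
      set y := r.pos with hy_def
      have hqw : ∀ u v, q.w u v = wFr n (F.erase x) u v := fun _ _ => rfl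
      rw [hqw] at hlt
      have hy : y ∈ F.erase x := by
        by_contra hny
        rw [wFr_low n _ hge' (by rw [hcval]; omega), if_neg hny] at hlt
        omega
      have hrw0 : r.w c y = 0 := by
        rw [wFr_low n _ hge' (by rw [hcval]; omega), if_pos hy] at hlt
        omega
      have hrw : ∀ u v, r.w u v = zapW (wFr n (F.erase x)) c y u v := by
        intro u v
        unfold zapW
        by_cases hp : (u = c ∧ v = y) ∨ (u = y ∧ v = c)
        · rw [if_pos hp]
          rcases hp with ⟨h1, h2⟩ | ⟨h1, h2⟩ <;> subst h1 <;> subst h2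
          · exact hrw0
          · rw [r.symm]; exact hrw0
        · rw [if_neg hp]; exact hoth u v hp
      have H := ih (k - 1) (by omega) (F.erase x)
        (by rw [Finset.card_erase_of_mem hx, hcard]) hge' c y
        (by rw [hcval]; omega) hy r rfl hrw
      have htgt : (if Even (k - 1) then c else (⟨1 - c.val, by omega⟩ : Fin n)) =
          if Even k then b else c := by
        have hbval : (⟨1 - c.val, by omega⟩ : Fin n) = b := by
          apply Fin.ext
          show 1 - c.val = b.val
          rw [hcval]; omega
        rw [hbval]
        by_cases h : Even k
        · rw [if_pos h, if_neg]
          rw [Nat.even_iff] at h ⊢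
          omega
        · rw [if_neg h, if_pos]
          rw [Nat.even_iff] at h ⊢
          omega
      rw [← htgt]
      exact H

/-- in Nim on `K_n` with all weights 1 starting at `v₁ = 0`, the
first player can force play to stay within the `SSB` subgraph on `v₁, v₂`
(always moving to `v₁ = 0` or `v₂ = 1`), exhausting the edges at `v₁, v₂` and
stranding the second player at `v₂` if `n` is even and at `v₁` if `n` is odd. -/
theorem stmt12 (n : ℕ) (hn : 2 ≤ n) :
    ForcesVia (fun x : Fin n => x.val = 0 ∨ x.val = 1)
      (if Even n then (⟨1, by omega⟩ : Fin n) else (⟨0, by omega⟩ : Fin n))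
      ⟨knW n, knW_symm n, ⟨0, by omega⟩⟩ := by
  set F0 : Finset (Fin n) := Finset.univ.filter (fun v : Fin n => 2 ≤ v.val) with hF0
  have hmemF0 : ∀ z : Fin n, z ∈ F0 ↔ 2 ≤ z.val := by
    intro z; rw [hF0, Finset.mem_filter]; simp
  have hgeF0 : ∀ z ∈ F0, 2 ≤ z.val := fun z hz => (hmemF0 z).mp hz
  have hcardF0 : F0.card = n - 2 := by
    have hsplit := Finset.card_filter_add_card_filter_not
      (s := (Finset.univ : Finset (Fin n))) (p := fun v : Fin n => 2 ≤ v.val)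
    have hneg : (Finset.univ.filter (fun v : Fin n => ¬ 2 ≤ v.val)) =
        {(⟨0, by omega⟩ : Fin n), ⟨1, by omega⟩} := by
      ext z
      simp only [Finset.mem_filter, Finset.mem_univ, true_and, Finset.mem_insert,
        Finset.mem_singleton, Fin.ext_iff]
      omega
    rw [hneg] at hsplit
    rw [Finset.card_pair (by simp [Fin.ext_iff])] at hsplit
    simp only [Finset.card_univ, Fintype.card_fin] at hsplit
    rw [hF0]
    omega
  set v0 : Fin n := ⟨0, by omega⟩ with hv0
  set v1 : Fin n := ⟨1, by omega⟩ with hv1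
  have hv1F0 : v1 ∉ F0 := by
    rw [hmemF0]
    show ¬ (2:ℕ) ≤ 1
    omega
  set P0 : NimPos (Fin n) := ⟨knW n, knW_symm n, v0⟩ with hP0
  set q1 : NimPos (Fin n) := ⟨wFr n F0, wFr_symm n F0, v1⟩ with hq1
  have hmove1 : NimMove P0 q1 := by
    refine ⟨?_, ?_, ?_⟩
    · intro h; have := congrArg Fin.val h; simp [hv0, hv1] at this
    · show q1.w v0 v1 < P0.w v0 v1
      show wFr n F0 v0 v1 < knW n v0 v1
      rw [wFr_low n F0 hgeF0 (by show (0:ℕ) < 2; omega), if_neg hv1F0]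
      unfold knW
      rw [if_pos (by show (0:ℕ) ≠ 1; omega)]
      omega
    · intro u v hnp
      show wFr n F0 u v = knW n u v
      by_cases hu2 : 2 ≤ u.val <;> by_cases hv2 : 2 ≤ v.val
      · rw [wFr_high n F0 hgeF0 hu2 hv2]
        unfold knW
        by_cases h : u = v
        · subst h; rw [if_pos rfl, if_neg (by omega)]
        · rw [if_neg h, if_pos (fun h' => h (Fin.ext h'))]
      · rw [wFr_low' n F0 hgeF0 (by omega), if_pos ((hmemF0 u).mpr hu2)]
        unfold knW
        rw [if_pos (by omega)]
      · rw [wFr_low n F0 hgeF0 (by omega), if_pos ((hmemF0 v).mpr hv2)]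
        unfold knW
        rw [if_pos (by omega)]
      · have huv : u.val = v.val := by
          by_contra h
          apply hnp
          have : u.val = 0 ∧ v.val = 1 ∨ u.val = 1 ∧ v.val = 0 := by omega
          rcases this with ⟨h1, h2⟩ | ⟨h1, h2⟩
          · exact Or.inl ⟨Fin.ext h1, Fin.ext h2⟩
          · exact Or.inr ⟨Fin.ext h1, Fin.ext h2⟩
        rw [wFr_low n F0 hgeF0 (by omega),
          if_neg (fun h => absurd (hgeF0 v h) (by omega))]
        unfold knW
        rw [if_neg (by omega)]
  refine ForcesVia.step P0 q1 (Or.inr rfl) hmove1 ?_ ?_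
  · intro hstk
    show q1.pos = if Even n then v1 else v0
    by_cases hn3 : 3 ≤ n
    · exfalso
      obtain ⟨r0, hr0⟩ := wFr_exists_move n F0 hgeF0 v1 ⟨2, by omega⟩
        (by show (1:ℕ) < 2; omega) ((hmemF0 _).mpr (by show (2:ℕ) ≤ 2; omega))
        q1 rfl (fun _ _ => rfl)
      exact hstk r0 hr0
    · have hn2 : n = 2 := by omega
      rw [if_pos (by rw [hn2]; exact even_two)]
  · intro r hr
    obtain ⟨hne, hlt, hoth⟩ := hr
    have hqpos : q1.pos = v1 := rfl
    rw [hqpos] at hne hlt hoth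
    set y := r.pos with hy_def
    have hqw : ∀ u v, q1.w u v = wFr n F0 u v := fun _ _ => rfl
    rw [hqw] at hlt
    have hy : y ∈ F0 := by
      by_contra hny
      rw [wFr_low n F0 hgeF0 (by show (1:ℕ) < 2; omega), if_neg hny] at hlt
      omega
    have hrw0 : r.w v1 y = 0 := by
      rw [wFr_low n F0 hgeF0 (by show (1:ℕ) < 2; omega), if_pos hy] at hlt
      omega
    have hrw : ∀ u v, r.w u v = zapW (wFr n F0) v1 y u v := by
      intro u v
      unfold zapW
      by_cases hp : (u = v1 ∧ v = y) ∨ (u = y ∧ v = v1)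
      · rw [if_pos hp]
        rcases hp with ⟨h1, h2⟩ | ⟨h1, h2⟩ <;> subst h1 <;> subst h2
        · exact hrw0
        · rw [r.symm]; exact hrw0
      · rw [if_neg hp]; exact hoth u v hp
    have H := ssb_aux n hn F0.card F0 rfl hgeF0 v1 y
      (by show (1:ℕ) < 2; omega) hy r rfl hrw
    have htgt : (if Even F0.card then v1 else (⟨1 - v1.val, by omega⟩ : Fin n)) =
        if Even n then v1 else v0 := by
      have h0 : (⟨1 - v1.val, by omega⟩ : Fin n) = v0 := by
        apply Fin.ext
        show 1 - (1:ℕ) = 0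
        omega
      rw [h0, hcardF0]
      by_cases h : Even n
      · rw [if_pos h, if_pos]
        rw [Nat.even_iff] at h ⊢
        omega
      · rw [if_neg h, if_neg]
        rw [Nat.even_iff] at h ⊢
        omega
    rw [← htgt]
    exact H
end

section
/- In Nim on graphs played on an even cycle C_{2n} in which every edge has weight 2, the second player has a winning strategy: whenever the first player reduces an edge to weight 1 and crosses it, the second player continues forward around the cycle reducing the next edge to weight 1; and the first player cannot profitably reduce an edge to 0, since that leaves the second player at the endpoint of an odd-length path. -/
namespace Stmt17

theorem mod_hi (m x : ℕ) (h1 : m ≤ x) (h2 : x < 2*m) : x % m = x - m := by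
  rw [Nat.mod_eq_sub_mod h1, Nat.mod_eq_of_lt (by omega)]

theorem ofs_ofs (m v s t : ℕ) : ((v + s) % m + t) % m = (v + (s + t) % m) % m := by
  rw [Nat.mod_add_mod, Nat.add_assoc, Nat.add_mod]
  conv_rhs => rw [Nat.add_mod, Nat.mod_mod_of_dvd _ dvd_rfl]

theorem ofs_inj (m v a b : ℕ) (hv : v < m) (ha : a < m) (hb : b < m) :
    (v + a) % m = (v + b) % m ↔ a = b := by
  constructor
  · intro h
    by_cases h1 : v + a < m <;> by_cases h2 : v + b < m
    · rw [Nat.mod_eq_of_lt h1, Nat.mod_eq_of_lt h2] at h; omega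
    · rw [Nat.mod_eq_of_lt h1, mod_hi m _ (by omega) (by omega)] at h; omega
    · rw [mod_hi m _ (by omega) (by omega), Nat.mod_eq_of_lt h2] at h; omega
    · rw [mod_hi m _ (by omega) (by omega), mod_hi m _ (by omega) (by omega)] at h; omega
  · rintro rfl; rfl

theorem ofs_zero (m v : ℕ) (hv : v < m) : (v + 0) % m = v := by
  rw [Nat.add_zero, Nat.mod_eq_of_lt hv]

theorem ofs_eq_base (m v a : ℕ) (hv : v < m) (ha : a < m) : (v + a) % m = v ↔ a = 0 := by
  constructor
  · intro h
    by_cases h1 : v + a < m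
    · rw [Nat.mod_eq_of_lt h1] at h; omega
    · rw [mod_hi m _ (by omega) (by omega)] at h; omega
  · rintro rfl; exact ofs_zero m v hv

theorem ofs_ne (m v a b : ℕ) (hv : v < m) (ha : a < m) (hb : b < m) (hab : a ≠ b) :
    (v + a) % m ≠ (v + b) % m := fun h => hab ((ofs_inj m v a b hv ha hb).mp h)

theorem ofs_ne_base (m v a : ℕ) (hv : v < m) (ha : a < m) (h0 : a ≠ 0) : (v + a) % m ≠ v :=
  fun h => h0 ((ofs_eq_base m v a hv ha).mp h)

theorem bwd_repr (m u v : ℕ) (hm : 2 ≤ m) (hu : u < m) (hv : v < m) (h : (u + 1) % m = v) :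
    u = (v + (m - 1)) % m := by
  by_cases h1 : u + 1 < m
  · rw [Nat.mod_eq_of_lt h1] at h
    by_cases h2 : v + (m - 1) < m
    · rw [Nat.mod_eq_of_lt h2]; omega
    · rw [mod_hi m (v + (m - 1)) (by omega) (by omega)]; omega
  · rw [show u + 1 = m by omega, Nat.mod_self] at h
    rw [Nat.mod_eq_of_lt (show v + (m - 1) < m by omega)]; omega

def upd (ω : ℕ → ℕ) (e c : ℕ) : ℕ → ℕ := fun i => if i = e then c else ω i

def total (m : ℕ) (ω : ℕ → ℕ) : ℕ := ∑ i ∈ Finset.range m, ω i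

theorem total_upd_lt (m : ℕ) (ω : ℕ → ℕ) (e c : ℕ) (he : e < m) (hc : c < ω e) :
    total m (upd ω e c) < total m ω := by
  apply Finset.sum_lt_sum
  · intro i _
    unfold upd
    split
    · next h => subst h; omega
    · exact le_refl _
  · exact ⟨e, Finset.mem_range.mpr he, by simp [upd]; omega⟩

theorem moverLoses_of {V : Type} (p : NimPos V)
    (h : ∀ q, NimMove p q → ∃ r, NimMove q r ∧ MoverLoses r) : MoverLoses p := by
  choose f h1 h2 using h
  exact MoverLoses.intro p f h1 h2

-- cycW evaluation
theorem cycW_fwd (m : ℕ) (hm : 3 ≤ m) (ω : ℕ → ℕ) (v u : Fin m) (hu : u.val = (v.val + 1) % m) :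
    cycW m ω v u = ω v.val := by
  unfold cycW
  rw [if_pos hu.symm, if_neg, Nat.add_zero]
  rw [hu, Nat.mod_add_mod]
  exact ofs_ne_base m v.val 2 v.isLt (by omega) (by omega)

theorem cycW_bwd (m : ℕ) (hm : 3 ≤ m) (ω : ℕ → ℕ) (v u : Fin m) (hu : (u.val + 1) % m = v.val) :
    cycW m ω v u = ω u.val := by
  unfold cycW
  rw [if_pos hu, if_neg, Nat.zero_add]
  rw [← hu, Nat.mod_add_mod]
  exact ofs_ne_base m u.val 2 u.isLt (by omega) (by omega)


theorem cycW_upd_frame (m : ℕ) (ω : ℕ → ℕ) (e c : ℕ) (x y a b : Fin m)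
    (hx : x.val = e) (hy : y.val = (e + 1) % m)
    (h : ¬((a = x ∧ b = y) ∨ (a = y ∧ b = x))) :
    cycW m (upd ω e c) a b = cycW m ω a b := by
  unfold cycW
  congr 1
  · by_cases h1 : (a.val + 1) % m = b.val
    · rw [if_pos h1, if_pos h1]
      unfold upd
      split
      · next hae =>
        exfalso
        apply h
        left
        have hax : a = x := Fin.val_injective (by rw [hae, hx])
        have hby : b = y := Fin.val_injective (by rw [← h1, hae, hy])
        exact ⟨hax, hby⟩
      · rfl
    · rw [if_neg h1, if_neg h1]
  · by_cases h2 : (b.val + 1) % m = a.val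
    · rw [if_pos h2, if_pos h2]
      unfold upd
      split
      · next hbe =>
        exfalso
        apply h
        right
        have hbx : b = x := Fin.val_injective (by rw [hbe, hx])
        have hay : a = y := Fin.val_injective (by rw [← h2, hbe, hy])
        exact ⟨hay, hbx⟩
      · rfl
    · rw [if_neg h2, if_neg h2]

theorem mk_move_fwd (m : ℕ) (hm : 3 ≤ m) (ω : ℕ → ℕ) (q : NimPos (Fin m)) (u : Fin m)
    (e c : ℕ) (hw : ∀ a b, q.w a b = cycW m ω a b) (he : e = q.pos.val)
    (hu : u.val = (q.pos.val + 1) % m) (hc : c < ω e) :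
    NimMove q ⟨cycW m (upd ω e c), cycW_symm m (upd ω e c), u⟩ := by
  subst he
  refine ⟨?_, ?_, ?_⟩
  · intro hh
    have hh' : q.pos = u := hh
    have : u.val = (q.pos.val + 1) % m := hu
    rw [← hh'] at this
    exact ofs_ne_base m q.pos.val 1 q.pos.isLt (by omega) (by omega) this.symm
  · show cycW m (upd ω q.pos.val c) q.pos u < q.w q.pos u
    rw [hw, cycW_fwd m hm ω q.pos u hu, cycW_fwd m hm (upd ω q.pos.val c) q.pos u hu]
    simp only [upd, if_pos rfl]
    exact hc
  · intro a b hab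
    show cycW m (upd ω q.pos.val c) a b = q.w a b
    rw [hw]
    exact cycW_upd_frame m ω q.pos.val c q.pos u a b rfl hu hab

theorem mk_move_bwd (m : ℕ) (hm : 3 ≤ m) (ω : ℕ → ℕ) (q : NimPos (Fin m)) (u : Fin m)
    (e c : ℕ) (hw : ∀ a b, q.w a b = cycW m ω a b) (he : e = u.val)
    (hu : (u.val + 1) % m = q.pos.val) (hc : c < ω e) :
    NimMove q ⟨cycW m (upd ω e c), cycW_symm m (upd ω e c), u⟩ := by
  subst he
  refine ⟨?_, ?_, ?_⟩
  · intro hh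
    have hh' : q.pos = u := hh
    have : (u.val + 1) % m = q.pos.val := hu
    rw [← hh'] at this
    exact ofs_ne_base m q.pos.val 1 q.pos.isLt (by omega) (by omega) this
  · show cycW m (upd ω u.val c) q.pos u < q.w q.pos u
    rw [hw, cycW_bwd m hm ω q.pos u hu, cycW_bwd m hm (upd ω u.val c) q.pos u hu]
    simp only [upd, if_pos rfl]
    exact hc
  · intro a b hab
    show cycW m (upd ω u.val c) a b = q.w a b
    rw [hw]
    apply cycW_upd_frame m ω u.val c u q.pos a b rfl hu.symm
    tauto

theorem move_decomp (m : ℕ) (hm : 3 ≤ m) (ω : ℕ → ℕ) (v : Fin m) (q : NimPos (Fin m))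
    (hq : NimMove ⟨cycW m ω, cycW_symm m ω, v⟩ q) :
    ∃ c : ℕ,
      (q.pos.val = (v.val + 1) % m ∧ c < ω v.val ∧
        ∀ a b, q.w a b = cycW m (upd ω v.val c) a b) ∨
      ((q.pos.val + 1) % m = v.val ∧ c < ω q.pos.val ∧
        ∀ a b, q.w a b = cycW m (upd ω q.pos.val c) a b) := by
  obtain ⟨hne, hlt, hfr⟩ := hq
  simp only at hne hlt hfr
  by_cases h1 : (v.val + 1) % m = q.pos.val
  · refine ⟨q.w v q.pos, Or.inl ⟨h1.symm, ?_, ?_⟩⟩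
    · rw [cycW_fwd m hm ω v q.pos h1.symm] at hlt
      exact hlt
    · intro a b
      by_cases hab : (a = v ∧ b = q.pos) ∨ (a = q.pos ∧ b = v)
      · rcases hab with ⟨ha, hb⟩ | ⟨ha, hb⟩
        · rw [ha, hb, cycW_fwd m hm _ v q.pos h1.symm]
          simp [upd]
        · rw [ha, hb, cycW_symm m _ q.pos v, cycW_fwd m hm _ v q.pos h1.symm]
          simp only [upd, if_pos rfl]
          exact q.symm q.pos v
      · rw [hfr a b hab]
        exact (cycW_upd_frame m ω v.val (q.w v q.pos) v q.pos a b rfl h1.symm hab).symm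
  · by_cases h2 : (q.pos.val + 1) % m = v.val
    · refine ⟨q.w v q.pos, Or.inr ⟨h2, ?_, ?_⟩⟩
      · rw [cycW_bwd m hm ω v q.pos h2] at hlt
        exact hlt
      · intro a b
        by_cases hab : (a = v ∧ b = q.pos) ∨ (a = q.pos ∧ b = v)
        · rcases hab with ⟨ha, hb⟩ | ⟨ha, hb⟩
          · rw [ha, hb, cycW_bwd m hm _ v q.pos h2]
            simp [upd]
          · rw [ha, hb, cycW_symm m _ q.pos v, cycW_bwd m hm _ v q.pos h2]
            simp only [upd, if_pos rfl]
            exact q.symm q.pos v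
        · rw [hfr a b hab]
          refine (cycW_upd_frame m ω q.pos.val (q.w v q.pos) q.pos v a b rfl h2.symm ?_).symm
          tauto
    · exfalso
      unfold cycW at hlt
      rw [if_neg h1, if_neg h2] at hlt
      exact Nat.not_lt_zero _ hlt

def goodA (m : ℕ) (ω : ℕ → ℕ) (v : ℕ) : Prop :=
  ∃ f b : ℕ, f % 2 = 0 ∧ b % 2 = 0 ∧ f < m ∧ b < m ∧
    (∀ i < f, 0 < ω ((v + i) % m)) ∧ ω ((v + f) % m) = 0 ∧
    (∀ i < b, 0 < ω ((v + (m - 1 - i)) % m)) ∧ ω ((v + (m - 1 - b)) % m) = 0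

def goodC (m : ℕ) (ω : ℕ → ℕ) (v : ℕ) : Prop :=
  ∃ j : ℕ, j ≤ m ∧ j % 2 = 0 ∧ ∀ i < m, ω ((v + i) % m) = if i < m - j then 2 else 1

def goodD (m : ℕ) (ω : ℕ → ℕ) (v : ℕ) : Prop :=
  ∃ j : ℕ, j ≤ m ∧ j % 2 = 0 ∧ ∀ i < m, ω ((v + i) % m) = if i < j then 1 else 2

def Good (m : ℕ) (ω : ℕ → ℕ) (v : ℕ) : Prop := goodA m ω v ∨ goodC m ω v ∨ goodD m ω v

-- Step lemma G1: class A, forward move then forward zeroing reply.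
theorem stepAF (m : ℕ) (hm : 4 ≤ m) (hme : m % 2 = 0) (ω : ℕ → ℕ) (v : ℕ) (hv : v < m)
    (f c : ℕ) (hf2 : f % 2 = 0) (hfm : f < m) (hff : 2 ≤ f)
    (hfr : ∀ i < f, 0 < ω ((v + i) % m)) (hf0 : ω ((v + f) % m) = 0) :
    goodA m (upd (upd ω v c) ((v + 1) % m) 0) ((v + 2) % m) := by
  refine ⟨f - 2, 0, by omega, by omega, by omega, by omega, ?_, ?_, ?_, ?_⟩
  · intro i hi
    rw [ofs_ofs, Nat.mod_eq_of_lt (show 2 + i < m by omega)]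
    unfold upd
    rw [if_neg (ofs_ne m v (2 + i) 1 hv (by omega) (by omega) (by omega)),
        if_neg (ofs_ne_base m v (2 + i) hv (by omega) (by omega))]
    exact hfr (2 + i) (by omega)
  · rw [ofs_ofs, show 2 + (f - 2) = f by omega, Nat.mod_eq_of_lt hfm]
    unfold upd
    rw [if_neg (ofs_ne m v f 1 hv hfm (by omega) (by omega)),
        if_neg (ofs_ne_base m v f hv hfm (by omega))]
    exact hf0
  · intro i hi; omega
  · rw [ofs_ofs, show 2 + (m - 1 - 0) = m + 1 by omega, Nat.add_mod_left,
        Nat.mod_eq_of_lt (show 1 < m by omega)]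
    unfold upd
    rw [if_pos rfl]

-- Step lemma G2: class A, backward move then backward zeroing reply.
theorem stepAB (m : ℕ) (hm : 4 ≤ m) (hme : m % 2 = 0) (ω : ℕ → ℕ) (v : ℕ) (hv : v < m)
    (b c : ℕ) (hb2 : b % 2 = 0) (hbm : b < m) (hbb : 2 ≤ b)
    (hbr : ∀ i < b, 0 < ω ((v + (m - 1 - i)) % m)) (hb0 : ω ((v + (m - 1 - b)) % m) = 0) :
    goodA m (upd (upd ω ((v + (m - 1)) % m) c) ((v + (m - 2)) % m) 0) ((v + (m - 2)) % m) := by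
  refine ⟨0, b - 2, by omega, by omega, by omega, by omega, ?_, ?_, ?_, ?_⟩
  · intro i hi; omega
  · rw [ofs_ofs, Nat.add_zero, Nat.mod_eq_of_lt (show m - 2 < m by omega)]
    unfold upd
    rw [if_pos rfl]
  · intro i hi
    rw [ofs_ofs, show m - 2 + (m - 1 - i) = m + (m - 3 - i) by omega, Nat.add_mod_left,
        Nat.mod_eq_of_lt (show m - 3 - i < m by omega)]
    unfold upd
    rw [if_neg (ofs_ne m v (m - 3 - i) (m - 2) hv (by omega) (by omega) (by omega)),
        if_neg (ofs_ne m v (m - 3 - i) (m - 1) hv (by omega) (by omega) (by omega))]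
    have := hbr (i + 2) (by omega)
    rwa [show m - 1 - (i + 2) = m - 3 - i by omega] at this
  · rw [ofs_ofs, show m - 2 + (m - 1 - (b - 2)) = m + (m - 1 - b) by omega, Nat.add_mod_left,
        Nat.mod_eq_of_lt (show m - 1 - b < m by omega)]
    unfold upd
    rw [if_neg (ofs_ne m v (m - 1 - b) (m - 2) hv (by omega) (by omega) (by omega)),
        if_neg (ofs_ne m v (m - 1 - b) (m - 1) hv (by omega) (by omega) (by omega))]
    exact hb0

-- Step lemma G3: all-positive, forward move then forward zeroing reply.
theorem stepPosF (m : ℕ) (hm : 4 ≤ m) (hme : m % 2 = 0) (ω : ℕ → ℕ) (v : ℕ) (hv : v < m)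
    (hpos : ∀ i < m, 0 < ω ((v + i) % m)) :
    goodA m (upd (upd ω v 0) ((v + 1) % m) 0) ((v + 2) % m) := by
  refine ⟨m - 2, 0, by omega, by omega, by omega, by omega, ?_, ?_, ?_, ?_⟩
  · intro i hi
    rw [ofs_ofs, Nat.mod_eq_of_lt (show 2 + i < m by omega)]
    unfold upd
    rw [if_neg (ofs_ne m v (2 + i) 1 hv (by omega) (by omega) (by omega)),
        if_neg (ofs_ne_base m v (2 + i) hv (by omega) (by omega))]
    exact hpos (2 + i) (by omega)
  · rw [ofs_ofs, show 2 + (m - 2) = m by omega, Nat.mod_self, ofs_zero m v hv]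
    unfold upd
    rw [if_neg (ofs_ne_base m v 1 hv (by omega) (by omega)).symm, if_pos rfl]
  · intro i hi; omega
  · rw [ofs_ofs, show 2 + (m - 1 - 0) = m + 1 by omega, Nat.add_mod_left,
        Nat.mod_eq_of_lt (show 1 < m by omega)]
    unfold upd
    rw [if_pos rfl]

-- Step lemma G4: all-positive, backward move then backward zeroing reply.
theorem stepPosB (m : ℕ) (hm : 4 ≤ m) (hme : m % 2 = 0) (ω : ℕ → ℕ) (v : ℕ) (hv : v < m)
    (hpos : ∀ i < m, 0 < ω ((v + i) % m)) :
    goodA m (upd (upd ω ((v + (m - 1)) % m) 0) ((v + (m - 2)) % m) 0) ((v + (m - 2)) % m) := by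
  refine ⟨0, m - 2, by omega, by omega, by omega, by omega, ?_, ?_, ?_, ?_⟩
  · intro i hi; omega
  · rw [ofs_ofs, Nat.add_zero, Nat.mod_eq_of_lt (show m - 2 < m by omega)]
    unfold upd
    rw [if_pos rfl]
  · intro i hi
    rw [ofs_ofs, show m - 2 + (m - 1 - i) = m + (m - 3 - i) by omega, Nat.add_mod_left,
        Nat.mod_eq_of_lt (show m - 3 - i < m by omega)]
    unfold upd
    rw [if_neg (ofs_ne m v (m - 3 - i) (m - 2) hv (by omega) (by omega) (by omega)),
        if_neg (ofs_ne m v (m - 3 - i) (m - 1) hv (by omega) (by omega) (by omega))]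
    exact hpos (m - 3 - i) (by omega)
  · rw [ofs_ofs, show m - 2 + (m - 1 - (m - 2)) = m - 1 by omega,
        Nat.mod_eq_of_lt (show m - 1 < m by omega)]
    unfold upd
    rw [if_neg (ofs_ne m v (m - 1) (m - 2) hv (by omega) (by omega) (by omega)), if_pos rfl]

-- Step lemma G5: C-pattern (ones behind), forward 2→1 then forward 2→1 reply.
theorem stepC (m : ℕ) (hm : 4 ≤ m) (ω : ℕ → ℕ) (v : ℕ) (hv : v < m)
    (j : ℕ) (hj : j + 2 ≤ m)
    (hpat : ∀ i < m, ω ((v + i) % m) = if i < m - j then 2 else 1) :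
    ∀ i < m, (upd (upd ω v 1) ((v + 1) % m) 1) (((v + 2) % m + i) % m) =
      if i < m - (j + 2) then 2 else 1 := by
  intro i hi
  rw [ofs_ofs]
  by_cases h1 : i < m - 2
  · rw [Nat.mod_eq_of_lt (show 2 + i < m by omega)]
    unfold upd
    rw [if_neg (ofs_ne m v (2 + i) 1 hv (by omega) (by omega) (by omega)),
        if_neg (ofs_ne_base m v (2 + i) hv (by omega) (by omega)),
        hpat (2 + i) (by omega)]
    split_ifs <;> omega
  · by_cases h2 : i = m - 2
    · rw [show 2 + i = m by omega, Nat.mod_self, ofs_zero m v hv]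
      unfold upd
      rw [if_neg (ofs_ne_base m v 1 hv (by omega) (by omega)).symm, if_pos rfl]
      split_ifs <;> omega
    · rw [show 2 + i = m + 1 by omega, Nat.add_mod_left,
          Nat.mod_eq_of_lt (show 1 < m by omega)]
      unfold upd
      rw [if_pos rfl]
      split_ifs <;> omega

-- Step lemma G6: D-pattern (ones ahead), backward 2→1 then backward 2→1 reply.
theorem stepD (m : ℕ) (hm : 4 ≤ m) (ω : ℕ → ℕ) (v : ℕ) (hv : v < m)
    (j : ℕ) (hj : j + 2 ≤ m)
    (hpat : ∀ i < m, ω ((v + i) % m) = if i < j then 1 else 2) :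
    ∀ i < m, (upd (upd ω ((v + (m - 1)) % m) 1) ((v + (m - 2)) % m) 1)
      (((v + (m - 2)) % m + i) % m) = if i < j + 2 then 1 else 2 := by
  intro i hi
  rw [ofs_ofs]
  by_cases h1 : i = 0
  · subst h1
    rw [Nat.add_zero, Nat.mod_eq_of_lt (show m - 2 < m by omega)]
    unfold upd
    rw [if_pos rfl]
    split_ifs <;> omega
  · by_cases h2 : i = 1
    · subst h2
      rw [show m - 2 + 1 = m - 1 by omega, Nat.mod_eq_of_lt (show m - 1 < m by omega)]
      unfold upd
      rw [if_neg (ofs_ne m v (m - 1) (m - 2) hv (by omega) (by omega) (by omega)), if_pos rfl]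
      split_ifs <;> omega
    · rw [show m - 2 + i = m + (i - 2) by omega, Nat.add_mod_left,
          Nat.mod_eq_of_lt (show i - 2 < m by omega)]
      unfold upd
      rw [if_neg (ofs_ne m v (i - 2) (m - 2) hv (by omega) (by omega) (by omega)),
          if_neg (ofs_ne m v (i - 2) (m - 1) hv (by omega) (by omega) (by omega)),
          hpat (i - 2) (by omega)]
      split_ifs <;> omega

theorem key (m : ℕ) (hm : 4 ≤ m) (hme : m % 2 = 0) (ω : ℕ → ℕ) (v : Fin m)
    (hg : Good m ω v.val) (q : NimPos (Fin m))
    (hq : NimMove ⟨cycW m ω, cycW_symm m ω, v⟩ q) :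
    ∃ (ω₂ : ℕ → ℕ) (z : Fin m), Good m ω₂ z.val ∧ total m ω₂ < total m ω ∧
      NimMove q ⟨cycW m ω₂, cycW_symm m ω₂, z⟩ := by
  have hm0 : 0 < m := by omega
  have hv : v.val < m := v.isLt
  obtain ⟨c, hcase⟩ := move_decomp m (by omega) ω v q hq
  rcases hcase with ⟨hu, hc, hqw⟩ | ⟨hu, hc, hqw⟩
  · -- FORWARD move by opponent
    set z : Fin m := ⟨(v.val + 2) % m, Nat.mod_lt _ hm0⟩ with hz
    have hzval : z.val = (q.pos.val + 1) % m := by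
      show (v.val + 2) % m = (q.pos.val + 1) % m
      rw [hu, Nat.mod_add_mod]
    have hne01 : (v.val + 1) % m ≠ v.val := ofs_ne_base m v.val 1 hv (by omega) (by omega)
    have hev : ∀ c', upd ω v.val c' ((v.val + 1) % m) = ω ((v.val + 1) % m) := by
      intro c'; unfold upd; rw [if_neg hne01]
    rcases hg with ⟨f, b, hf2, hb2, hfm, hbm, hfr, hf0, hbr, hb0⟩ |
      ⟨j, hjm, hj2, hpat⟩ | ⟨j, hjm, hj2, hpat⟩
    · -- class A
      have hfge : 2 ≤ f := by
        rcases Nat.eq_zero_or_pos f with h0 | h0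
        · exfalso; rw [h0, ofs_zero m v.val hv] at hf0; omega
        · omega
      have hpos1 : 0 < upd ω v.val c ((v.val + 1) % m) := by
        rw [hev]; exact hfr 1 (by omega)
      refine ⟨upd (upd ω v.val c) ((v.val + 1) % m) 0, z,
        Or.inl (stepAF m hm hme ω v.val hv f c hf2 hfm hfge hfr hf0), ?_, ?_⟩
      · calc total m (upd (upd ω v.val c) ((v.val + 1) % m) 0)
            < total m (upd ω v.val c) := total_upd_lt _ _ _ _ (Nat.mod_lt _ hm0) hpos1
          _ < total m ω := total_upd_lt _ _ _ _ hv hc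
      · exact mk_move_fwd m (by omega) (upd ω v.val c) q z _ 0 hqw hu.symm hzval hpos1
    · -- class C (ones behind)
      have hwv : ω v.val = if 0 < m - j then 2 else 1 := by
        have h := hpat 0 hm0; rwa [ofs_zero m v.val hv] at h
      by_cases hc0 : c = 0
      · subst hc0
        have hpos : ∀ i < m, 0 < ω ((v.val + i) % m) := by
          intro i hi; rw [hpat i hi]; split_ifs <;> omega
        have hpos1 : 0 < upd ω v.val 0 ((v.val + 1) % m) := by
          rw [hev]; exact hpos 1 (by omega)
        refine ⟨upd (upd ω v.val 0) ((v.val + 1) % m) 0, z,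
          Or.inl (stepPosF m hm hme ω v.val hv hpos), ?_, ?_⟩
        · calc total m (upd (upd ω v.val 0) ((v.val + 1) % m) 0)
              < total m (upd ω v.val 0) := total_upd_lt _ _ _ _ (Nat.mod_lt _ hm0) hpos1
            _ < total m ω := total_upd_lt _ _ _ _ hv hc
        · exact mk_move_fwd m (by omega) (upd ω v.val 0) q z _ 0 hqw hu.symm hzval hpos1
      · have hj' : j + 2 ≤ m ∧ c = 1 := by
          by_cases hjlt : j < m
          · rw [if_pos (by omega)] at hwv; omega
          · rw [if_neg (by omega)] at hwv; omega
        obtain ⟨hjm2, hc1⟩ := hj'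
        subst hc1
        have h2v : upd ω v.val 1 ((v.val + 1) % m) = 2 := by
          rw [hev, hpat 1 (by omega), if_pos (by omega)]
        refine ⟨upd (upd ω v.val 1) ((v.val + 1) % m) 1, z,
          Or.inr (Or.inl ⟨j + 2, by omega, by omega, stepC m hm ω v.val hv j hjm2 hpat⟩), ?_, ?_⟩
        · calc total m (upd (upd ω v.val 1) ((v.val + 1) % m) 1)
              < total m (upd ω v.val 1) := total_upd_lt _ _ _ _ (Nat.mod_lt _ hm0) (by omega)
            _ < total m ω := total_upd_lt _ _ _ _ hv hc
        · exact mk_move_fwd m (by omega) (upd ω v.val 1) q z _ 1 hqw hu.symm hzval (by omega)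
    · -- class D (ones ahead)
      have hwv : ω v.val = if 0 < j then 1 else 2 := by
        have h := hpat 0 hm0; rwa [ofs_zero m v.val hv] at h
      by_cases hc0 : c = 0
      · subst hc0
        have hpos : ∀ i < m, 0 < ω ((v.val + i) % m) := by
          intro i hi; rw [hpat i hi]; split_ifs <;> omega
        have hpos1 : 0 < upd ω v.val 0 ((v.val + 1) % m) := by
          rw [hev]; exact hpos 1 (by omega)
        refine ⟨upd (upd ω v.val 0) ((v.val + 1) % m) 0, z,
          Or.inl (stepPosF m hm hme ω v.val hv hpos), ?_, ?_⟩
        · calc total m (upd (upd ω v.val 0) ((v.val + 1) % m) 0)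
              < total m (upd ω v.val 0) := total_upd_lt _ _ _ _ (Nat.mod_lt _ hm0) hpos1
            _ < total m ω := total_upd_lt _ _ _ _ hv hc
        · exact mk_move_fwd m (by omega) (upd ω v.val 0) q z _ 0 hqw hu.symm hzval hpos1
      · have hj0 : j = 0 ∧ c = 1 := by
          by_cases hj : 0 < j
          · rw [if_pos hj] at hwv; omega
          · rw [if_neg hj] at hwv; omega
        obtain ⟨hj0', hc1⟩ := hj0
        subst hj0'; subst hc1
        have hpatC : ∀ i < m, ω ((v.val + i) % m) = if i < m - 0 then 2 else 1 := by
          intro i hi; have h := hpat i hi; split_ifs at h ⊢ <;> omega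
        have h2v : upd ω v.val 1 ((v.val + 1) % m) = 2 := by
          rw [hev, hpatC 1 (by omega), if_pos (by omega)]
        refine ⟨upd (upd ω v.val 1) ((v.val + 1) % m) 1, z,
          Or.inr (Or.inl ⟨2, by omega, by omega, stepC m hm ω v.val hv 0 (by omega) hpatC⟩), ?_, ?_⟩
        · calc total m (upd (upd ω v.val 1) ((v.val + 1) % m) 1)
              < total m (upd ω v.val 1) := total_upd_lt _ _ _ _ (Nat.mod_lt _ hm0) (by omega)
            _ < total m ω := total_upd_lt _ _ _ _ hv hc
        · exact mk_move_fwd m (by omega) (upd ω v.val 1) q z _ 1 hqw hu.symm hzval (by omega)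
  · -- BACKWARD move by opponent
    have hQ : q.pos.val = (v.val + (m - 1)) % m :=
      bwd_repr m q.pos.val v.val (by omega) q.pos.isLt hv hu
    rw [hQ] at hc hqw
    set z : Fin m := ⟨(v.val + (m - 2)) % m, Nat.mod_lt _ hm0⟩ with hz
    have hzadj : (z.val + 1) % m = q.pos.val := by
      rw [hQ]
      show ((v.val + (m - 2)) % m + 1) % m = (v.val + (m - 1)) % m
      rw [Nat.mod_add_mod, show v.val + (m - 2) + 1 = v.val + (m - 1) by omega]
    have hne12 : (v.val + (m - 2)) % m ≠ (v.val + (m - 1)) % m :=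
      ofs_ne m v.val (m - 2) (m - 1) hv (by omega) (by omega) (by omega)
    have hev : ∀ c', upd ω ((v.val + (m - 1)) % m) c' ((v.val + (m - 2)) % m) =
        ω ((v.val + (m - 2)) % m) := by
      intro c'; unfold upd; rw [if_neg hne12]
    rcases hg with ⟨f, b, hf2, hb2, hfm, hbm, hfr, hf0, hbr, hb0⟩ |
      ⟨j, hjm, hj2, hpat⟩ | ⟨j, hjm, hj2, hpat⟩
    · -- class A
      have hbge : 2 ≤ b := by
        rcases Nat.eq_zero_or_pos b with h0 | h0
        · exfalso
          rw [h0, show m - 1 - 0 = m - 1 by omega] at hb0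
          omega
        · omega
      have hpos1 : 0 < upd ω ((v.val + (m - 1)) % m) c ((v.val + (m - 2)) % m) := by
        rw [hev]
        have h := hbr 1 (by omega)
        rwa [show m - 1 - 1 = m - 2 by omega] at h
      refine ⟨upd (upd ω ((v.val + (m - 1)) % m) c) ((v.val + (m - 2)) % m) 0, z,
        Or.inl (stepAB m hm hme ω v.val hv b c hb2 hbm hbge hbr hb0), ?_, ?_⟩
      · calc total m (upd (upd ω ((v.val + (m - 1)) % m) c) ((v.val + (m - 2)) % m) 0)
            < total m (upd ω ((v.val + (m - 1)) % m) c) :=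
              total_upd_lt _ _ _ _ (Nat.mod_lt _ hm0) hpos1
          _ < total m ω := total_upd_lt _ _ _ _ (Nat.mod_lt _ hm0) hc
      · exact mk_move_bwd m (by omega) (upd ω ((v.val + (m - 1)) % m) c) q z _ 0 hqw rfl
          hzadj hpos1
    · -- class C
      have hwv : ω ((v.val + (m - 1)) % m) = if m - 1 < m - j then 2 else 1 :=
        hpat (m - 1) (by omega)
      by_cases hc0 : c = 0
      · subst hc0
        have hpos : ∀ i < m, 0 < ω ((v.val + i) % m) := by
          intro i hi; rw [hpat i hi]; split_ifs <;> omega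
        have hpos1 : 0 < upd ω ((v.val + (m - 1)) % m) 0 ((v.val + (m - 2)) % m) := by
          rw [hev]; exact hpos (m - 2) (by omega)
        refine ⟨upd (upd ω ((v.val + (m - 1)) % m) 0) ((v.val + (m - 2)) % m) 0, z,
          Or.inl (stepPosB m hm hme ω v.val hv hpos), ?_, ?_⟩
        · calc total m (upd (upd ω ((v.val + (m - 1)) % m) 0) ((v.val + (m - 2)) % m) 0)
              < total m (upd ω ((v.val + (m - 1)) % m) 0) :=
                total_upd_lt _ _ _ _ (Nat.mod_lt _ hm0) hpos1
            _ < total m ω := total_upd_lt _ _ _ _ (Nat.mod_lt _ hm0) hc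
        · exact mk_move_bwd m (by omega) (upd ω ((v.val + (m - 1)) % m) 0) q z _ 0 hqw rfl
            hzadj hpos1
      · have hj0 : j = 0 ∧ c = 1 := by
          by_cases hj : j = 0
          · rw [if_pos (by omega)] at hwv; omega
          · rw [if_neg (by omega)] at hwv; omega
        obtain ⟨hj0', hc1⟩ := hj0
        subst hj0'; subst hc1
        have hpatD : ∀ i < m, ω ((v.val + i) % m) = if i < 0 then 1 else 2 := by
          intro i hi; have h := hpat i hi; split_ifs at h ⊢ <;> omega
        have h2v : upd ω ((v.val + (m - 1)) % m) 1 ((v.val + (m - 2)) % m) = 2 := by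
          rw [hev, hpatD (m - 2) (by omega), if_neg (by omega)]
        refine ⟨upd (upd ω ((v.val + (m - 1)) % m) 1) ((v.val + (m - 2)) % m) 1, z,
          Or.inr (Or.inr ⟨2, by omega, by omega, ?_⟩), ?_, ?_⟩
        · have h := stepD m hm ω v.val hv 0 (by omega) hpatD
          intro i hi
          have h2 := h i hi
          rwa [show (0 : ℕ) + 2 = 2 by omega] at h2
        · calc total m (upd (upd ω ((v.val + (m - 1)) % m) 1) ((v.val + (m - 2)) % m) 1)
              < total m (upd ω ((v.val + (m - 1)) % m) 1) :=
                total_upd_lt _ _ _ _ (Nat.mod_lt _ hm0) (by omega)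
            _ < total m ω := total_upd_lt _ _ _ _ (Nat.mod_lt _ hm0) hc
        · exact mk_move_bwd m (by omega) (upd ω ((v.val + (m - 1)) % m) 1) q z _ 1 hqw rfl
            hzadj (by omega)
    · -- class D
      have hwv : ω ((v.val + (m - 1)) % m) = if m - 1 < j then 1 else 2 :=
        hpat (m - 1) (by omega)
      by_cases hc0 : c = 0
      · subst hc0
        have hpos : ∀ i < m, 0 < ω ((v.val + i) % m) := by
          intro i hi; rw [hpat i hi]; split_ifs <;> omega
        have hpos1 : 0 < upd ω ((v.val + (m - 1)) % m) 0 ((v.val + (m - 2)) % m) := by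
          rw [hev]; exact hpos (m - 2) (by omega)
        refine ⟨upd (upd ω ((v.val + (m - 1)) % m) 0) ((v.val + (m - 2)) % m) 0, z,
          Or.inl (stepPosB m hm hme ω v.val hv hpos), ?_, ?_⟩
        · calc total m (upd (upd ω ((v.val + (m - 1)) % m) 0) ((v.val + (m - 2)) % m) 0)
              < total m (upd ω ((v.val + (m - 1)) % m) 0) :=
                total_upd_lt _ _ _ _ (Nat.mod_lt _ hm0) hpos1
            _ < total m ω := total_upd_lt _ _ _ _ (Nat.mod_lt _ hm0) hc
        · exact mk_move_bwd m (by omega) (upd ω ((v.val + (m - 1)) % m) 0) q z _ 0 hqw rfl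
            hzadj hpos1
      · have hj' : j + 2 ≤ m ∧ c = 1 := by
          by_cases hj : m - 1 < j
          · rw [if_pos hj] at hwv; omega
          · rw [if_neg hj] at hwv; omega
        obtain ⟨hjm2, hc1⟩ := hj'
        subst hc1
        have h2v : upd ω ((v.val + (m - 1)) % m) 1 ((v.val + (m - 2)) % m) = 2 := by
          rw [hev, hpat (m - 2) (by omega), if_neg (by omega)]
        refine ⟨upd (upd ω ((v.val + (m - 1)) % m) 1) ((v.val + (m - 2)) % m) 1, z,
          Or.inr (Or.inr ⟨j + 2, by omega, by omega, stepD m hm ω v.val hv j hjm2 hpat⟩), ?_, ?_⟩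
        · calc total m (upd (upd ω ((v.val + (m - 1)) % m) 1) ((v.val + (m - 2)) % m) 1)
              < total m (upd ω ((v.val + (m - 1)) % m) 1) :=
                total_upd_lt _ _ _ _ (Nat.mod_lt _ hm0) (by omega)
            _ < total m ω := total_upd_lt _ _ _ _ (Nat.mod_lt _ hm0) hc
        · exact mk_move_bwd m (by omega) (upd ω ((v.val + (m - 1)) % m) 1) q z _ 1 hqw rfl
            hzadj (by omega)

theorem good_loses (m : ℕ) (hm : 4 ≤ m) (hme : m % 2 = 0) (ω : ℕ → ℕ) (v : Fin m)
    (hg : Good m ω v.val) : MoverLoses ⟨cycW m ω, cycW_symm m ω, v⟩ := by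
  suffices H : ∀ N (ω : ℕ → ℕ) (v : Fin m), Good m ω v.val → total m ω < N →
      MoverLoses ⟨cycW m ω, cycW_symm m ω, v⟩ by
    exact H (total m ω + 1) ω v hg (by omega)
  intro N
  induction N with
  | zero => intro ω v _ h; omega
  | succ N ih =>
    intro ω v hg hN
    apply moverLoses_of
    intro q hq
    obtain ⟨ω₂, z, hg2, hdec, hmv⟩ := key m hm hme ω v hg q hq
    exact ⟨_, hmv, ih ω₂ z hg2 (by omega)⟩

end Stmt17

open Stmt17

/-- Nim on the even cycle `C_{2n}` with every edge of weight 2: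
the second player wins; whenever the first player reduces an incident edge to
weight 1 and crosses it, continuing forward around the cycle reducing the next
edge to weight 1 is a winning reply for the second player; and reducing an
edge to 0 on the first move loses for the first player (it leaves the second
player at the endpoint of an odd-length path, a p-position). -/
theorem stmt17 (n : ℕ) (hn : 2 ≤ n) (s : Fin (2*n)) :
    MoverLoses ⟨cycW (2*n) (fun _ => 2), cycW_symm (2*n) (fun _ => 2), s⟩ ∧
    (∀ q, NimMove ⟨cycW (2*n) (fun _ => 2), cycW_symm (2*n) (fun _ => 2), s⟩ q →
      q.w s q.pos = 1 →
      ∃ r, NimMove q r ∧ r.pos ≠ s ∧ r.w q.pos r.pos = 1 ∧ MoverLoses r) ∧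
    (∀ q, NimMove ⟨cycW (2*n) (fun _ => 2), cycW_symm (2*n) (fun _ => 2), s⟩ q →
      q.w s q.pos = 0 → MoverWins q) := by
  have hm : 4 ≤ 2*n := by omega
  have hme : (2*n) % 2 = 0 := by omega
  have hm0 : 0 < 2*n := by omega
  have hv : s.val < 2*n := s.isLt
  have hpatC : ∀ i < 2*n, (fun _ => (2:ℕ)) ((s.val + i) % (2*n)) =
      if i < 2*n - 0 then 2 else 1 := by
    intro i hi; simp only; rw [if_pos (by omega)]
  have hpatD : ∀ i < 2*n, (fun _ => (2:ℕ)) ((s.val + i) % (2*n)) =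
      if i < 0 then 1 else 2 := by
    intro i hi; simp only; rw [if_neg (by omega)]
  have hposC : ∀ i < 2*n, 0 < (fun _ => (2:ℕ)) ((s.val + i) % (2*n)) := by
    intro i hi; simp
  refine ⟨?_, ?_, ?_⟩
  · exact good_loses (2*n) hm hme (fun _ => 2) s
      (Or.inr (Or.inl ⟨0, by omega, by omega, hpatC⟩))
  · -- the 1-reply part
    intro q hq h1
    obtain ⟨c, hcase⟩ := move_decomp (2*n) (by omega) (fun _ => 2) s q hq
    rcases hcase with ⟨hu, hc, hqw⟩ | ⟨hu, hc, hqw⟩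
    · -- forward
      have hcv : q.w s q.pos = c := by
        rw [hqw s q.pos, cycW_fwd (2*n) (by omega) _ s q.pos hu]
        simp [upd]
      have hc1 : c = 1 := by omega
      subst hc1
      set z : Fin (2*n) := ⟨(s.val + 2) % (2*n), Nat.mod_lt _ hm0⟩ with hz
      have hzval : z.val = (q.pos.val + 1) % (2*n) := by
        show (s.val + 2) % (2*n) = (q.pos.val + 1) % (2*n)
        rw [hu, Nat.mod_add_mod]
      have hne01 : (s.val + 1) % (2*n) ≠ s.val :=
        ofs_ne_base (2*n) s.val 1 hv (by omega) (by omega)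
      have h2v : upd (fun _ => 2) s.val 1 ((s.val + 1) % (2*n)) = 2 := by
        unfold upd; rw [if_neg hne01]
      refine ⟨⟨cycW (2*n) (upd (upd (fun _ => 2) s.val 1) ((s.val + 1) % (2*n)) 1),
        cycW_symm _ _, z⟩,
        mk_move_fwd (2*n) (by omega) _ q z _ 1 hqw hu.symm hzval (by omega), ?_, ?_, ?_⟩
      · intro h
        exact ofs_ne_base (2*n) s.val 2 hv (by omega) (by omega) (congrArg Fin.val h)
      · show cycW (2*n) _ q.pos z = 1
        rw [cycW_fwd (2*n) (by omega) _ q.pos z hzval, hu]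
        unfold upd
        rw [if_pos rfl]
      · exact good_loses (2*n) hm hme _ z
          (Or.inr (Or.inl ⟨2, by omega, by omega,
            stepC (2*n) hm (fun _ => 2) s.val hv 0 (by omega) hpatC⟩))
    · -- backward
      have hQ : q.pos.val = (s.val + (2*n - 1)) % (2*n) :=
        bwd_repr (2*n) q.pos.val s.val (by omega) q.pos.isLt hv hu
      have hcv : q.w s q.pos = c := by
        rw [hqw s q.pos, cycW_bwd (2*n) (by omega) _ s q.pos hu]
        simp [upd]
      have hc1 : c = 1 := by omega
      subst hc1
      rw [hQ] at hqw
      set z : Fin (2*n) := ⟨(s.val + (2*n - 2)) % (2*n), Nat.mod_lt _ hm0⟩ with hz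
      have hzadj : (z.val + 1) % (2*n) = q.pos.val := by
        rw [hQ]
        show ((s.val + (2*n - 2)) % (2*n) + 1) % (2*n) = (s.val + (2*n - 1)) % (2*n)
        rw [Nat.mod_add_mod, show s.val + (2*n - 2) + 1 = s.val + (2*n - 1) by omega]
      have hne12 : (s.val + (2*n - 2)) % (2*n) ≠ (s.val + (2*n - 1)) % (2*n) :=
        ofs_ne (2*n) s.val (2*n - 2) (2*n - 1) hv (by omega) (by omega) (by omega)
      have h2v : upd (fun _ => 2) ((s.val + (2*n - 1)) % (2*n)) 1
          ((s.val + (2*n - 2)) % (2*n)) = 2 := by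
        unfold upd; rw [if_neg hne12]
      refine ⟨⟨cycW (2*n) (upd (upd (fun _ => 2) ((s.val + (2*n - 1)) % (2*n)) 1)
          ((s.val + (2*n - 2)) % (2*n)) 1), cycW_symm _ _, z⟩,
        mk_move_bwd (2*n) (by omega) _ q z _ 1 hqw rfl hzadj (by omega), ?_, ?_, ?_⟩
      · intro h
        exact ofs_ne_base (2*n) s.val (2*n - 2) hv (by omega) (by omega) (congrArg Fin.val h)
      · show cycW (2*n) _ q.pos z = 1
        rw [cycW_bwd (2*n) (by omega) _ q.pos z hzadj]
        show upd _ ((s.val + (2*n - 2)) % (2*n)) 1 ((s.val + (2*n - 2)) % (2*n)) = 1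
        unfold upd
        rw [if_pos rfl]
      · refine good_loses (2*n) hm hme _ z (Or.inr (Or.inr ⟨2, by omega, by omega, ?_⟩))
        have h := stepD (2*n) hm (fun _ => 2) s.val hv 0 (by omega) hpatD
        intro i hi
        have h2 := h i hi
        rwa [show (0:ℕ) + 2 = 2 by omega] at h2
  · -- the 0-move part
    intro q hq h0
    obtain ⟨c, hcase⟩ := move_decomp (2*n) (by omega) (fun _ => 2) s q hq
    rcases hcase with ⟨hu, hc, hqw⟩ | ⟨hu, hc, hqw⟩
    · -- forward
      have hcv : q.w s q.pos = c := by
        rw [hqw s q.pos, cycW_fwd (2*n) (by omega) _ s q.pos hu]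
        simp [upd]
      have hc0 : c = 0 := by omega
      subst hc0
      set z : Fin (2*n) := ⟨(s.val + 2) % (2*n), Nat.mod_lt _ hm0⟩ with hz
      have hzval : z.val = (q.pos.val + 1) % (2*n) := by
        show (s.val + 2) % (2*n) = (q.pos.val + 1) % (2*n)
        rw [hu, Nat.mod_add_mod]
      have hne01 : (s.val + 1) % (2*n) ≠ s.val :=
        ofs_ne_base (2*n) s.val 1 hv (by omega) (by omega)
      have h2v : upd (fun _ => 2) s.val 0 ((s.val + 1) % (2*n)) = 2 := by
        unfold upd; rw [if_neg hne01]
      exact ⟨⟨cycW (2*n) (upd (upd (fun _ => 2) s.val 0) ((s.val + 1) % (2*n)) 0),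
        cycW_symm _ _, z⟩,
        mk_move_fwd (2*n) (by omega) _ q z _ 0 hqw hu.symm hzval (by omega),
        good_loses (2*n) hm hme _ z
          (Or.inl (stepPosF (2*n) hm hme (fun _ => 2) s.val hv hposC))⟩
    · -- backward
      have hQ : q.pos.val = (s.val + (2*n - 1)) % (2*n) :=
        bwd_repr (2*n) q.pos.val s.val (by omega) q.pos.isLt hv hu
      have hcv : q.w s q.pos = c := by
        rw [hqw s q.pos, cycW_bwd (2*n) (by omega) _ s q.pos hu]
        simp [upd]
      have hc0 : c = 0 := by omega
      subst hc0
      rw [hQ] at hqw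
      set z : Fin (2*n) := ⟨(s.val + (2*n - 2)) % (2*n), Nat.mod_lt _ hm0⟩ with hz
      have hzadj : (z.val + 1) % (2*n) = q.pos.val := by
        rw [hQ]
        show ((s.val + (2*n - 2)) % (2*n) + 1) % (2*n) = (s.val + (2*n - 1)) % (2*n)
        rw [Nat.mod_add_mod, show s.val + (2*n - 2) + 1 = s.val + (2*n - 1) by omega]
      have hne12 : (s.val + (2*n - 2)) % (2*n) ≠ (s.val + (2*n - 1)) % (2*n) :=
        ofs_ne (2*n) s.val (2*n - 2) (2*n - 1) hv (by omega) (by omega) (by omega)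
      have h2v : upd (fun _ => 2) ((s.val + (2*n - 1)) % (2*n)) 0
          ((s.val + (2*n - 2)) % (2*n)) = 2 := by
        unfold upd; rw [if_neg hne12]
      exact ⟨⟨cycW (2*n) (upd (upd (fun _ => 2) ((s.val + (2*n - 1)) % (2*n)) 0)
          ((s.val + (2*n - 2)) % (2*n)) 0), cycW_symm _ _, z⟩,
        mk_move_bwd (2*n) (by omega) _ q z _ 0 hqw rfl hzadj (by omega),
        good_loses (2*n) hm hme _ z
          (Or.inl (stepPosB (2*n) hm hme (fun _ => 2) s.val hv hposC))⟩
end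

section
/- In Nim on graphs, if the indicator piece is at a vertex v of a tree such that every path from v to a leaf has even length, and all edges have weight 1, then the player to move loses under optimal play. -/
section Aux
open SimpleGraph

variable {V : Type} {G : SimpleGraph V}

open Classical in
/-- weight function: 1 on tree edges not in the deleted list `E`, else 0. -/
noncomputable def wPf (G : SimpleGraph V) (E : List (Sym2 V)) (a b : V) : ℕ :=
  if G.Adj a b ∧ s(a,b) ∉ E then 1 else 0

lemma wPf_symm (E : List (Sym2 V)) (a b : V) : wPf G E a b = wPf G E b a := by
  unfold wPf
  rw [G.adj_comm a b, Sym2.eq_swap]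

lemma not_mem_support_of_acyclic (hac : G.IsAcyclic) {v u u' : V} (P : G.Walk v u)
    (hP : P.IsPath) (h : G.Adj u u') (he : s(u,u') ∉ P.edges) : u' ∉ P.support := by
  classical
  intro hmem
  have hQ : (P.dropUntil u' hmem).IsPath := hP.dropUntil hmem
  have heQ : s(u,u') ∉ (P.dropUntil u' hmem).edges :=
    fun hx => he (SimpleGraph.Walk.edges_dropUntil_subset _ _ hx)
  exact hac _ ((SimpleGraph.Walk.cons_isCycle_iff _ h).2 ⟨hQ, heQ⟩)

lemma isPath_concat {v u u' : V} (P : G.Walk v u) (h : G.Adj u u')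
    (hP : P.IsPath) (hu' : u' ∉ P.support) : (P.concat h).IsPath := by
  have h1 : (SimpleGraph.Walk.cons h.symm P.reverse).IsPath :=
    (SimpleGraph.Walk.cons_isPath_iff h.symm P.reverse).2 ⟨hP.reverse, by simpa using hu'⟩
  have h2 := h1.reverse
  simpa [SimpleGraph.Walk.reverse_cons, SimpleGraph.Walk.reverse_reverse, SimpleGraph.Walk.concat_eq_append] using h2

lemma edge_start {a b : V} (Q : G.Walk a b) (hQ : Q.IsPath) (x : V)
    (hx : s(a,x) ∈ Q.edges) : x = Q.getVert 1 := by
  cases Q with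
  | nil => simp at hx
  | cons hadj q =>
    simp only [SimpleGraph.Walk.edges_cons, List.mem_cons] at hx
    rcases hx with hx | hx
    · rcases Sym2.eq_iff.mp hx with ⟨_, rfl⟩ | ⟨rfl, rfl⟩
      · simp [SimpleGraph.Walk.getVert_cons_succ]
      · exact (G.loopless.irrefl _ hadj).elim
    · exact absurd (SimpleGraph.Walk.fst_mem_support_of_mem_edges q hx)
        ((SimpleGraph.Walk.cons_isPath_iff hadj q).mp hQ).2

end Aux

section Aux2
open SimpleGraph

variable {V : Type} {G : SimpleGraph V}

lemma exists_ext [Fintype V] [DecidableRel G.Adj] {v u' : V} (P : G.Walk v u')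
    (hP : P.IsPath) (hodd : Odd P.length)
    (hleaf : ∀ (l : V) (p : G.Walk v l), p.IsPath → G.degree l = 1 → Even p.length) :
    ∃ u'', G.Adj u' u'' ∧ s(u', u'') ∉ P.edges := by
  classical
  set R := P.reverse with hR
  have hRp : R.IsPath := hP.reverse
  have hRnil : ¬ R.Nil := by
    rw [SimpleGraph.Walk.nil_iff_length_eq]
    simp only [hR, SimpleGraph.Walk.length_reverse]
    rcases hodd with ⟨m, hm⟩
    omega
  have hadj : G.Adj u' (R.getVert 1) := SimpleGraph.Walk.adj_snd hRnil
  have hdeg1 : G.degree u' ≠ 1 := fun hd =>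
    (Nat.not_even_iff_odd.mpr hodd) (hleaf u' P hP hd)
  have hdegpos : 0 < G.degree u' := (G.degree_pos_iff_exists_adj u').2 ⟨_, hadj⟩
  have hdeg : 1 < G.degree u' := by omega
  obtain ⟨x, hxmem, hxne⟩ := Finset.exists_mem_ne hdeg (R.getVert 1)
  have hxadj : G.Adj u' x := (G.mem_neighborFinset u' x).mp hxmem
  refine ⟨x, hxadj, fun hmem => ?_⟩
  have hmemR : s(u', x) ∈ R.edges := by
    rw [hR, SimpleGraph.Walk.edges_reverse, List.mem_reverse]; exact hmem
  exact hxne (edge_start R hRp x hmemR)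
end Aux2

section Main
open SimpleGraph

lemma moverLoses_of_forall {V : Type} (p : NimPos V)
    (H : ∀ q, NimMove p q → ∃ r, NimMove q r ∧ MoverLoses r) : MoverLoses p := by
  choose f h1 h2 using H
  exact MoverLoses.intro p f h1 h2

lemma main_lemma {V : Type} [Fintype V] {G : SimpleGraph V} [DecidableRel G.Adj]
    (hG : G.IsTree) (v : V)
    (hleaf : ∀ (l : V) (p : G.Walk v l), p.IsPath → G.degree l = 1 → Even p.length) :
    ∀ (k : ℕ) (u : V) (P : G.Walk v u), P.IsPath → Even P.length →
      Fintype.card V - P.length ≤ k →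
      ∀ p : NimPos V, p.pos = u → (∀ a b, p.w a b = wPf G P.edges a b) → MoverLoses p := by
  intro k
  induction k with
  | zero =>
    intro u P hP _ hk p _ _
    exact absurd hP.length_lt (by omega)
  | succ k ih =>
    intro u P hP heven hk p hpp hpw
    classical
    apply moverLoses_of_forall
    intro q hq
    set u' := q.pos with hu'
    obtain ⟨hne, hlt, hother⟩ := hq
    rw [hpp] at hne hlt hother
    rw [← hu'] at hne hlt hother
    rw [hpw] at hlt
    have hcond : G.Adj u u' ∧ s(u, u') ∉ P.edges := by
      by_contra hc
      simp only [wPf] at hlt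
      rw [if_neg hc] at hlt
      omega
    obtain ⟨hadj, hedge⟩ := hcond
    have hq0 : q.w u u' = 0 := by
      simp only [wPf] at hlt
      rw [if_pos ⟨hadj, hedge⟩] at hlt
      omega
    set P' : G.Walk v u' := P.concat hadj with hP'def
    have hu'sup : u' ∉ P.support := not_mem_support_of_acyclic hG.2 P hP hadj hedge
    have hP' : P'.IsPath := isPath_concat P hadj hP hu'sup
    have hP'len : P'.length = P.length + 1 := SimpleGraph.Walk.length_concat P hadj
    have hP'odd : Odd P'.length := by
      rcases heven with ⟨m, hm⟩; exact ⟨m, by omega⟩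
    have hP'edges : P'.edges = P.edges ++ [s(u, u')] := by
      rw [hP'def, SimpleGraph.Walk.edges_concat]
      simp [List.concat_eq_append]
    have hqw : ∀ a b, q.w a b = wPf G P'.edges a b := by
      intro a b
      by_cases hab : (a = u ∧ b = u') ∨ (a = u' ∧ b = u)
      · have hmem : s(a, b) ∈ P'.edges := by
          rw [hP'edges]
          rcases hab with ⟨rfl, rfl⟩ | ⟨rfl, rfl⟩ <;> simp [Sym2.eq_swap]
        rw [show wPf G P'.edges a b = 0 by simp only [wPf]; rw [if_neg (by tauto)]]
        rcases hab with ⟨rfl, rfl⟩ | ⟨rfl, rfl⟩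
        · exact hq0
        · rw [q.symm]; exact hq0
      · rw [hother a b hab, hpw a b]
        have hne2 : s(a, b) ≠ s(u, u') := fun h => hab (Sym2.eq_iff.mp h)
        have hiff : (s(a, b) ∈ P'.edges) ↔ (s(a, b) ∈ P.edges) := by
          rw [hP'edges]; simp [hne2]
        simp only [wPf]
        split_ifs <;> first | rfl | (exfalso; tauto)
    obtain ⟨u'', hadj'', hedge''⟩ := exists_ext P' hP' hP'odd hleaf
    have hu''sup : u'' ∉ P'.support := not_mem_support_of_acyclic hG.2 P' hP' hadj'' hedge''
    set P'' : G.Walk v u'' := P'.concat hadj'' with hP''def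
    have hP'' : P''.IsPath := isPath_concat P' hadj'' hP' hu''sup
    have hP''len : P''.length = P.length + 2 := by
      rw [hP''def, SimpleGraph.Walk.length_concat, hP'len]
    have hP''even : Even P''.length := by
      rcases heven with ⟨m, hm⟩; exact ⟨m + 1, by omega⟩
    have hP''edges : P''.edges = P'.edges ++ [s(u', u'')] := by
      rw [hP''def, SimpleGraph.Walk.edges_concat]
      simp [List.concat_eq_append]
    refine ⟨⟨wPf G P''.edges, fun a b => wPf_symm _ a b, u''⟩, ⟨?_, ?_, ?_⟩, ?_⟩
    · exact hadj''.ne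
    · show wPf G P''.edges u' u'' < q.w u' u''
      rw [hqw]
      have h1 : wPf G P''.edges u' u'' = 0 := by
        simp only [wPf]
        rw [if_neg]
        rw [hP''edges]
        simp
      have h2 : wPf G P'.edges u' u'' = 1 := by
        simp only [wPf]
        rw [if_pos ⟨hadj'', hedge''⟩]
      omega
    · intro a b hab
      replace hab : ¬((a = u' ∧ b = u'') ∨ (a = u'' ∧ b = u')) := hab
      show wPf G P''.edges a b = q.w a b
      rw [hqw a b]
      have hne2 : s(a, b) ≠ s(u', u'') := fun h => hab (Sym2.eq_iff.mp h)
      have hiff : (s(a, b) ∈ P''.edges) ↔ (s(a, b) ∈ P'.edges) := by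
        rw [hP''edges]; simp [hne2]
      simp only [wPf]
      split_ifs <;> first | rfl | (exfalso; tauto)
    · exact ih u'' P'' hP'' hP''even (by omega) _ rfl (fun a b => rfl)

end Main

/-- Nim with all edge weights 1 on a tree, piece at a vertex `v`
from which every path to a leaf has even length: the player to move loses. -/
theorem stmt18 {V : Type} [Fintype V] (G : SimpleGraph V) [DecidableRel G.Adj]
    (hG : G.IsTree) (v : V)
    (hleaf : ∀ (l : V) (p : G.Walk v l), p.IsPath → G.degree l = 1 →
      Even p.length) :
    MoverLoses ⟨fun a b => if G.Adj a b then 1 else 0,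
      fun a b => if_congr (G.adj_comm a b) rfl rfl, v⟩ := by
  apply main_lemma hG v hleaf (Fintype.card V) v (SimpleGraph.Walk.nil)
    SimpleGraph.Walk.IsPath.nil (by simp) (by simp) _ rfl
  intro a b
  simp [wPf]
end
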